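/- arXiv:1305.0069 — 8 statements merged into one kernel-verified Lean document; each statement's English description precedes it below -/
import Mathlib

section
/- A monotone block move on a permutation decreases the number of breakpoints by at most three. -/
/-- The identity permutation of `{1,…,n}` as a list `[1, 2, …, n]`. -/
def idL (n : ℕ) : List ℕ := (List.range n).map (· + 1)

/-- `l` is a permutation of `{1,…,n}` (written as a list). -/
def IsPermList (n : ℕ) (l : List ℕ) : Prop := l.Perm (idL n)

/-- The extension of `π` by `π₀ = 0` and `π_{n+1} = n+1`. -/
def ext (n : ℕ) (l : List ℕ) : List ℕ := 0 :: (l ++ [n + 1])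

/-- Number of adjacent pairs of the extended permutation satisfying `p`. -/
def adjCount (p : ℕ → ℕ → Bool) (n : ℕ) (l : List ℕ) : ℕ :=
  ((ext n l).zip (ext n l).tail).countP (fun q => p q.1 q.2)

/-- Number of breakpoints: adjacent pairs with `π_{i+1} ≠ π_i + 1`. -/
def bp (n : ℕ) (l : List ℕ) : ℕ := adjCount (fun a b => b ≠ a + 1) n l

/-- Number of descents: adjacent pairs with `π_i > π_{i+1}`. -/
def des (n : ℕ) (l : List ℕ) : ℕ := adjCount (fun a b => b < a) n l

/-- Number of gaps: adjacent pairs with `π_{i+1} > π_i + 1`. -/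
def gap (n : ℕ) (l : List ℕ) : ℕ := adjCount (fun a b => a + 1 < b) n l

/-- Number of inverse descents: pairs of positions `i < j` with `π_i = π_j + 1`. -/
def invDes (l : List ℕ) : ℕ :=
  (Finset.univ.filter (fun p : Fin l.length × Fin l.length =>
    (p.1 : ℕ) < (p.2 : ℕ) ∧ l.get p.1 = l.get p.2 + 1)).card

/-- Number of inverse gaps: pairs of positions with `i > j + 1` and `π_i = π_j + 1`. -/
def invGap (l : List ℕ) : ℕ :=
  (Finset.univ.filter (fun p : Fin l.length × Fin l.length =>
    (p.2 : ℕ) + 1 < (p.1 : ℕ) ∧ l.get p.1 = l.get p.2 + 1)).card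

/-- `l'` is obtained from `l` by a block move: exchanging two nonempty
consecutive blocks `B` and `C`. -/
def IsBlockMove (l l' : List ℕ) : Prop :=
  ∃ A B C D : List ℕ, B ≠ [] ∧ C ≠ [] ∧ l = A ++ B ++ C ++ D ∧ l' = A ++ C ++ B ++ D

/-- A monotone block move: every element of the first (left) exchanged block
exceeds every element of the second (right) exchanged block. -/
def IsMonotoneBlockMove (l l' : List ℕ) : Prop :=
  ∃ A B C D : List ℕ, B ≠ [] ∧ C ≠ [] ∧ (∀ x ∈ B, ∀ y ∈ C, y < x) ∧
    l = A ++ B ++ C ++ D ∧ l' = A ++ C ++ B ++ D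

/-- A single-element block move: one of the two exchanged blocks has size one. -/
def IsSingleBlockMove (l l' : List ℕ) : Prop :=
  ∃ A B C D : List ℕ, B ≠ [] ∧ C ≠ [] ∧ (B.length = 1 ∨ C.length = 1) ∧
    l = A ++ B ++ C ++ D ∧ l' = A ++ C ++ B ++ D

/-- A monotone single-element block move. -/
def IsMonoSingleBlockMove (l l' : List ℕ) : Prop :=
  ∃ A B C D : List ℕ, B ≠ [] ∧ C ≠ [] ∧ (B.length = 1 ∨ C.length = 1) ∧
    (∀ x ∈ B, ∀ y ∈ C, y < x) ∧ l = A ++ B ++ C ++ D ∧ l' = A ++ C ++ B ++ D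

/-- `l` can be transformed into `target` by `t` moves of type `R`. -/
def SortsIn (R : List ℕ → List ℕ → Prop) (l target : List ℕ) (t : ℕ) : Prop :=
  ∃ c : ℕ → List ℕ, c 0 = l ∧ c t = target ∧ ∀ i < t, R (c i) (c (i + 1))

/-- Length of the longest increasing subsequence of `l`. -/
def lis (l : List ℕ) : ℕ :=
  ((l.sublists.filter (fun s => decide (List.IsChain (· < ·) s))).map List.length).foldr max 0


lemma pairs_append {α : Type*} (u v : List α) (hu : u ≠ []) (hv : v ≠ []) :
    (u ++ v).zip (u ++ v).tail =
      u.zip u.tail ++ (u.getLast hu, v.head hv) :: v.zip v.tail := by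
  induction u with
  | nil => exact absurd rfl hu
  | cons a u ih =>
    cases u with
    | nil =>
      cases v with
      | nil => exact absurd rfl hv
      | cons b t => simp
    | cons b t =>
      have := ih (by simp)
      simp only [List.cons_append, List.tail_cons] at this ⊢
      simp only [List.zip_cons_cons, List.cons_append, List.getLast_cons] at this ⊢
      rw [this]
      rfl

lemma countP_pairs_bounds (p : ℕ × ℕ → Bool) (X B C Y : List ℕ)
    (hX : X ≠ []) (hB : B ≠ []) (hC : C ≠ []) (hY : Y ≠ []) :
    ((X ++ (B ++ (C ++ Y))).zip (X ++ (B ++ (C ++ Y))).tail).countP p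
        ≤ (X.zip X.tail).countP p + (B.zip B.tail).countP p
          + (C.zip C.tail).countP p + (Y.zip Y.tail).countP p + 3 ∧
    (X.zip X.tail).countP p + (B.zip B.tail).countP p
          + (C.zip C.tail).countP p + (Y.zip Y.tail).countP p
        ≤ ((X ++ (B ++ (C ++ Y))).zip (X ++ (B ++ (C ++ Y))).tail).countP p := by
  rw [pairs_append X _ hX (by simp [hB]), pairs_append B _ hB (by simp [hC]),
    pairs_append C Y hC hY]
  simp only [List.countP_append, List.countP_cons]
  split_ifs <;> omega

lemma bp_block_move (n : ℕ) (A B C D : List ℕ) (hB : B ≠ []) (hC : C ≠ []) :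
    bp n (A ++ B ++ C ++ D) ≤ bp n (A ++ C ++ B ++ D) + 3 := by
  have h1 : ext n (A ++ B ++ C ++ D) = (0 :: A) ++ (B ++ (C ++ (D ++ [n+1]))) := by
    simp [ext]
  have h2 : ext n (A ++ C ++ B ++ D) = (0 :: A) ++ (C ++ (B ++ (D ++ [n+1]))) := by
    simp [ext]
  have hX : (0 :: A : List ℕ) ≠ [] := by simp
  have hY : (D ++ [n+1] : List ℕ) ≠ [] := by simp
  simp only [bp, adjCount, h1, h2]
  set p : ℕ × ℕ → Bool := fun q => decide (q.2 ≠ q.1 + 1) with hp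
  have b1 := countP_pairs_bounds p (0 :: A) B C (D ++ [n+1]) hX hB hC hY
  have b2 := countP_pairs_bounds p (0 :: A) C B (D ++ [n+1]) hX hC hB hY
  omega

/-- A monotone block move decreases the number of breakpoints by at most three. -/
theorem monotone_block_move_bp (n : ℕ) (l l' : List ℕ)
    (hl : IsPermList n l) (hmove : IsMonotoneBlockMove l l') :
    bp n l ≤ bp n l' + 3 := by
  obtain ⟨A, B, C, D, hB, hC, -, h1, h2⟩ := hmove
  subst h1 h2
  exact bp_block_move n A B C D hB hC
end

section
/- A monotone block move on a permutation decreases the number of descents by at most one. -/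
/-- Count of adjacent pairs of `l` satisfying `p`. -/
def dcP (p : ℕ → ℕ → Bool) (l : List ℕ) : ℕ :=
  ((l.zip l.tail).countP (fun q => p q.1 q.2))

lemma dcP_append (p : ℕ → ℕ → Bool) : ∀ (X Y : List ℕ) (hX : X ≠ []) (hY : Y ≠ []),
    dcP p (X ++ Y) = dcP p X + dcP p Y +
      (if p (X.getLast hX) (Y.head hY) then 1 else 0)
  | [], _, hX, _ => absurd rfl hX
  | [x], y :: ys, _, _ => by
      simp [dcP, List.countP_cons]; exact if_congr Iff.rfl rfl rfl
  | x :: x' :: xs, Y, _, hY => by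
      have ih := dcP_append p (x' :: xs) Y (by simp) hY
      simp only [List.cons_append] at *
      simp only [dcP, List.zip, List.tail, List.zipWith, List.countP_cons] at ih ⊢
      rw [List.getLast_cons_cons] at *
      omega

/-- A monotone block move decreases the number of descents by at most one. -/
theorem monotone_block_move_des (n : ℕ) (l l' : List ℕ)
    (hl : IsPermList n l) (hmove : IsMonotoneBlockMove l l') :
    des n l ≤ des n l' + 1 := by
  obtain ⟨A, B, C, D, hB, hC, hBC, hl1, hl2⟩ := hmove
  set p : ℕ → ℕ → Bool := fun a b => decide (b < a) with hp
  set A' : List ℕ := 0 :: A with hA'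
  set D' : List ℕ := D ++ [n + 1] with hD'
  have hA'ne : A' ≠ [] := by simp [hA']
  have hD'ne : D' ≠ [] := by simp [hD']
  have e1 : ext n l = A' ++ (B ++ (C ++ D')) := by simp [ext, hl1, hA', hD']
  have e2 : ext n l' = A' ++ (C ++ (B ++ D')) := by simp [ext, hl2, hA', hD']
  have hdl : des n l = dcP p (ext n l) := rfl
  have hdl' : des n l' = dcP p (ext n l') := rfl
  set a := A'.getLast hA'ne with ha
  set b := B.head hB with hb
  set c := C.head hC with hc
  set bl := B.getLast hB with hbl
  set cl := C.getLast hC with hcl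
  set d := D'.head hD'ne with hd
  have hBCD : B ++ (C ++ D') ≠ [] := by simp [hB]
  have hCBD : C ++ (B ++ D') ≠ [] := by simp [hC]
  have hCD : C ++ D' ≠ [] := by simp [hC]
  have hBD : B ++ D' ≠ [] := by simp [hB]
  have hh1 : (B ++ (C ++ D')).head hBCD = b := List.head_append_of_ne_nil hB
  have hh2 : (C ++ (B ++ D')).head hCBD = c := List.head_append_of_ne_nil hC
  have hh3 : (C ++ D').head hCD = c := List.head_append_of_ne_nil hC
  have hh4 : (B ++ D').head hBD = b := List.head_append_of_ne_nil hB
  have E1 : des n l = dcP p A' + (dcP p B + (dcP p C + dcP p D' +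
      (if p cl d then 1 else 0)) + (if p bl c then 1 else 0)) +
      (if p a b then 1 else 0) := by
    rw [hdl, e1, dcP_append p A' _ hA'ne hBCD, dcP_append p B _ hB hCD,
      dcP_append p C _ hC hD'ne, hh1, hh3]
  have E2 : des n l' = dcP p A' + (dcP p C + (dcP p B + dcP p D' +
      (if p bl d then 1 else 0)) + (if p cl b then 1 else 0)) +
      (if p a c then 1 else 0) := by
    rw [hdl', e2, dcP_append p A' _ hA'ne hCBD, dcP_append p C _ hC hBD,
      dcP_append p B _ hB hD'ne, hh2, hh4]
  have h1 : c < b := hBC _ (List.head_mem hB) _ (List.head_mem hC)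
  have h2 : cl < bl := hBC _ (List.getLast_mem hB) _ (List.getLast_mem hC)
  rw [E1, E2]
  simp only [hp, decide_eq_true_eq]
  split_ifs <;> omega
end

section
/- A monotone block move on a permutation decreases the number of gaps by at most two. -/
def cnt (p : ℕ → ℕ → Bool) : List ℕ → ℕ
  | a :: b :: rest => (if p a b then 1 else 0) + cnt p (b :: rest)
  | _ => 0

def lastD : List ℕ → ℕ
  | [] => 0
  | [a] => a
  | _ :: b :: t => lastD (b :: t)

lemma lastD_mem : ∀ (x : ℕ) (xs : List ℕ), lastD (x :: xs) ∈ x :: xs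
  | x, [] => by simp [lastD]
  | x, y :: t => List.mem_cons_of_mem x (lastD_mem y t)

lemma cnt_cons2 (p : ℕ → ℕ → Bool) (u v : ℕ) (L : List ℕ) :
    cnt p (u :: v :: L) = (if p u v then 1 else 0) + cnt p (v :: L) := rfl

lemma cnt_eq (p : ℕ → ℕ → Bool) : ∀ l : List ℕ,
    (l.zip l.tail).countP (fun q => p q.1 q.2) = cnt p l
  | [] => rfl
  | [a] => rfl
  | a :: b :: rest => by
    have := cnt_eq p (b :: rest)
    rw [cnt_cons2]
    simp only [List.zip, List.tail, List.zipWith, List.countP_cons] at *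
    omega

lemma cnt_split (p : ℕ → ℕ → Bool) (a : ℕ) :
    ∀ xs ys : List ℕ, cnt p (xs ++ a :: ys) = cnt p (xs ++ [a]) + cnt p (a :: ys) := by
  intro xs
  induction xs with
  | nil => intro ys; simp [cnt]
  | cons x xs ih =>
    intro ys
    cases xs with
    | nil =>
      simp only [List.cons_append, List.nil_append, cnt_cons2]
      have : cnt p [a] = 0 := rfl
      omega
    | cons x' t =>
      have h := ih ys
      simp only [List.cons_append, cnt_cons2] at *
      omega

lemma cnt_concat (p : ℕ → ℕ → Bool) (a : ℕ) :
    ∀ (xs : List ℕ) (x : ℕ), cnt p ((x :: xs) ++ [a]) =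
      cnt p (x :: xs) + (if p (lastD (x :: xs)) a then 1 else 0)
  | [], x => by simp [cnt, lastD]; rfl
  | y :: t, x => by
    have := cnt_concat p a t y
    simp only [List.cons_append, cnt_cons2, lastD] at *
    have hc : cnt p [x] = 0 := rfl
    have hc2 : cnt p [y] = 0 := rfl
    rw [this]; exact (Nat.add_assoc _ _ _).symm

lemma cnt_four (p : ℕ → ℕ → Bool) (X B₁ C₁ E₁ : List ℕ) (x b c e : ℕ) :
    cnt p ((x :: X) ++ b :: (B₁ ++ c :: (C₁ ++ e :: E₁))) =
      cnt p ((x :: X) ++ [b]) + cnt p ((b :: B₁) ++ [c]) +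
        cnt p ((c :: C₁) ++ [e]) + cnt p (e :: E₁) := by
  have h1 := cnt_split p b (x :: X) (B₁ ++ c :: (C₁ ++ e :: E₁))
  have h2 := cnt_split p c (b :: B₁) (C₁ ++ e :: E₁)
  have h3 := cnt_split p e (c :: C₁) E₁
  simp only [List.cons_append] at *
  omega

/-- A monotone block move decreases the number of gaps by at most two. -/
theorem monotone_block_move_gap (n : ℕ) (l l' : List ℕ)
    (hl : IsPermList n l) (hmove : IsMonotoneBlockMove l l') :
    gap n l ≤ gap n l' + 2 := by
  obtain ⟨A, B, C, D, hB, hC, hmono, h1, h2⟩ := hmove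
  obtain ⟨b₀, B₁, rfl⟩ := List.exists_cons_of_ne_nil hB
  obtain ⟨c₀, C₁, rfl⟩ := List.exists_cons_of_ne_nil hC
  obtain ⟨e₀, E₁, hE⟩ := List.exists_cons_of_ne_nil (l := D ++ [n + 1]) (by simp)
  set p : ℕ → ℕ → Bool := fun a b => decide (a + 1 < b) with hp
  have hgl : gap n l = cnt p (ext n l) := cnt_eq p (ext n l)
  have hgl' : gap n l' = cnt p (ext n l') := cnt_eq p (ext n l')
  have hextl : ext n l = (0 :: A) ++ b₀ :: (B₁ ++ c₀ :: (C₁ ++ e₀ :: E₁)) := by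
    simp [ext, h1, ← hE]
  have hextl' : ext n l' = (0 :: A) ++ c₀ :: (C₁ ++ b₀ :: (B₁ ++ e₀ :: E₁)) := by
    simp [ext, h2, ← hE]
  rw [hgl, hgl', hextl, hextl', cnt_four, cnt_four]
  rw [cnt_concat p b₀ A 0, cnt_concat p c₀ A 0,
      cnt_concat p c₀ B₁ b₀, cnt_concat p b₀ C₁ c₀,
      cnt_concat p e₀ C₁ c₀, cnt_concat p e₀ B₁ b₀]
  have hmem : c₀ < lastD (b₀ :: B₁) := hmono _ (lastD_mem b₀ B₁) c₀ List.mem_cons_self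
  have hfalse : p (lastD (b₀ :: B₁)) c₀ = false := by
    simp [hp]; omega
  rw [hfalse]
  simp only [hp, decide_eq_true_eq, Bool.false_eq_true, if_false]
  split_ifs <;> omega
end

section
/- A monotone block move on a permutation decreases the number of inverse descents by at most one. -/
def cp : List ℕ → ℕ
  | [] => 0
  | a :: t => t.countP (fun b => a == b + 1) + cp t

def crossCnt : List ℕ → List ℕ → ℕ
  | [], _ => 0
  | a :: x, y => y.countP (fun b => a == b + 1) + crossCnt x y

lemma crossCnt_append_left (x y z : List ℕ) :
    crossCnt (x ++ y) z = crossCnt x z + crossCnt y z := by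
  induction x with
  | nil => simp [crossCnt]
  | cons a x ih => simp [crossCnt, ih]; omega

lemma crossCnt_append_right (x y z : List ℕ) :
    crossCnt x (y ++ z) = crossCnt x y + crossCnt x z := by
  induction x with
  | nil => simp [crossCnt]
  | cons a x ih => simp [crossCnt, ih, List.countP_append]; omega

lemma cp_append (x y : List ℕ) : cp (x ++ y) = cp x + cp y + crossCnt x y := by
  induction x with
  | nil => simp [cp, crossCnt]
  | cons a x ih => simp [cp, crossCnt, ih, List.countP_append]; omega

lemma countP_eq_sum (a : ℕ) (t : List ℕ) :
    t.countP (fun b => a == b + 1) = ∑ j : Fin t.length, if a = t.get j + 1 then 1 else 0 := by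
  induction t with
  | nil => simp
  | cons b t ih =>
    have hcast : (∑ j : Fin (b :: t).length, if a = (b :: t).get j + 1 then 1 else 0)
        = ∑ j : Fin (t.length + 1), if a = (b :: t).get j + 1 then 1 else 0 := rfl
    rw [List.countP_cons, hcast, Fin.sum_univ_succ]
    simp [ih]
    by_cases h : a = b + 1
    · simp [h]; omega
    · simp [h]

lemma invDes_cons (a : ℕ) (t : List ℕ) :
    invDes (a :: t) = t.countP (fun b => a == b + 1) + invDes t := by
  rw [invDes, invDes, Finset.card_filter, Finset.card_filter, Fintype.sum_prod_type,
    Fintype.sum_prod_type, countP_eq_sum]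
  show (∑ i : Fin (t.length + 1), ∑ j : Fin (t.length + 1),
      if (i : ℕ) < (j : ℕ) ∧ (a :: t).get i = (a :: t).get j + 1 then 1 else 0) = _
  rw [Fin.sum_univ_succ]
  congr 1
  · rw [Fin.sum_univ_succ]
    simp
  · refine Finset.sum_congr rfl fun i _ => ?_
    rw [Fin.sum_univ_succ]
    simp [Fin.succ_lt_succ_iff]

lemma invDes_eq_cp (l : List ℕ) : invDes l = cp l := by
  induction l with
  | nil => simp [invDes, cp]
  | cons a t ih => rw [invDes_cons, cp, ih]

lemma crossCnt_eq_zero {x y : List ℕ} (h : ∀ a ∈ x, ∀ b ∈ y, a ≠ b + 1) :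
    crossCnt x y = 0 := by
  induction x with
  | nil => rfl
  | cons a x ih =>
    rw [crossCnt, ih (fun a ha => h a (by simp [ha])), List.countP_eq_zero.2]
    intro b hb
    simpa using h a (by simp) b hb

lemma countP_le_one {p : ℕ → Bool} {m : List ℕ} (hm : m.Nodup) {x : ℕ}
    (h : ∀ a ∈ m, p a → a = x) : m.countP p ≤ 1 := by
  rw [List.countP_eq_length_filter]
  have hnd : (m.filter p).Nodup := hm.filter p
  have hall : ∀ a ∈ m.filter p, a = x := fun a ha => by
    rw [List.mem_filter] at ha; exact h a ha.1 ha.2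
  match hfe : m.filter p with
  | [] => simp
  | [_] => simp
  | a :: b :: r =>
    rw [hfe] at hnd hall
    exfalso
    have hab : a ≠ b := fun h => (List.nodup_cons.1 hnd).1 (by simp [h])
    exact hab ((hall a (by simp)).trans (hall b (by simp)).symm)

lemma crossCnt_le_one {B C : List ℕ} (hB : B.Nodup) (hC : C.Nodup)
    (hmono : ∀ x ∈ B, ∀ y ∈ C, y < x) : crossCnt B C ≤ 1 := by
  induction B with
  | nil => simp [crossCnt]
  | cons b B' ih =>
    rw [crossCnt]
    by_cases h : ∃ c ∈ C, b = c + 1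
    · obtain ⟨c, hcC, hbc⟩ := h
      have h1 : C.countP (fun b' => b == b' + 1) ≤ 1 := by
        refine countP_le_one hC (x := c) fun a ha hpa => ?_
        have : b = a + 1 := by simpa using hpa
        omega
      have h2 : crossCnt B' C = 0 := by
        refine crossCnt_eq_zero fun b' hb' c' hc' hbc' => ?_
        have h3 : c < b' := hmono b' (by simp [hb']) c hcC
        have h4 : c' < b := hmono b (by simp) c' hc'
        have : b' = b := by omega
        exact (List.nodup_cons.1 hB).1 (this ▸ hb')
      omega
    · have h0 : C.countP (fun b' => b == b' + 1) = 0 := by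
        rw [List.countP_eq_zero]
        intro c hc
        simpa using fun hbc => h ⟨c, hc, hbc⟩
      rw [h0]
      simpa using ih (List.nodup_cons.1 hB).2 (fun x hx => hmono x (by simp [hx]))

/-- A monotone block move decreases the number of inverse descents by at most one. -/
theorem monotone_block_move_invDes (n : ℕ) (l l' : List ℕ)
    (hl : IsPermList n l) (hmove : IsMonotoneBlockMove l l') :
    invDes l ≤ invDes l' + 1 := by
  obtain ⟨A, B, C, D, hB, hC, hmono, hl1, hl2⟩ := hmove
  have hnd : l.Nodup := hl.nodup_iff.2 <| by
    exact List.Nodup.map (fun a b => by omega) (List.nodup_range (n := n))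
  rw [hl1] at hnd
  have hBnd : B.Nodup := hnd.sublist <| by
    refine List.Sublist.trans ?_ ((List.sublist_append_left _ C).trans (List.sublist_append_left _ D))
    exact List.sublist_append_right A B
  have hCnd : C.Nodup := hnd.sublist <| by
    refine List.Sublist.trans ?_ (List.sublist_append_left _ D)
    exact List.sublist_append_right (A ++ B) C
  have hCB : crossCnt C B = 0 :=
    crossCnt_eq_zero fun c hc b hb hcb => by have := hmono b hb c hc; omega
  have hBC : crossCnt B C ≤ 1 := crossCnt_le_one hBnd hCnd hmono
  rw [invDes_eq_cp, invDes_eq_cp, hl1, hl2]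
  simp only [cp_append, crossCnt_append_left, crossCnt_append_right]
  omega
end

section
/- A monotone block move on a permutation decreases the number of inverse gaps by at most two. -/
theorem blockget (A B C D : List ℕ) (i j : ℕ)
    (hi : i < (A++B++C++D).length) (hj : j < (A++C++B++D).length)
    (hcase : (i < A.length ∧ j = i) ∨
      (A.length ≤ i ∧ i < A.length + B.length ∧ j = i + C.length) ∨
      (A.length + B.length ≤ i ∧ i < A.length + B.length + C.length ∧ j + B.length = i) ∨
      (A.length + B.length + C.length ≤ i ∧ j = i)) :
    (A++C++B++D)[j]'hj = (A++B++C++D)[i]'hi := by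
  simp only [List.length_append] at hi hj
  rcases hcase with ⟨h1, rfl⟩ | ⟨h1, h2, rfl⟩ | ⟨h1, h2, h3⟩ | ⟨h1, rfl⟩ <;>
    simp only [List.getElem_append, List.length_append] <;>
    split_ifs <;> first | rfl | (congr 1 <;> omega) | (exfalso; omega)

theorem memBC (A B C D : List ℕ) (i : ℕ) (hi : i < (A++B++C++D).length)
    (h1 : A.length ≤ i) (h2 : i < A.length + B.length) :
    (A++B++C++D)[i]'hi ∈ B := by
  simp only [List.getElem_append, List.length_append]
  split_ifs <;> first | (exact List.getElem_mem _) | (exfalso; omega)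

theorem memCC (A B C D : List ℕ) (i : ℕ) (hi : i < (A++B++C++D).length)
    (h1 : A.length + B.length ≤ i) (h2 : i < A.length + B.length + C.length) :
    (A++B++C++D)[i]'hi ∈ C := by
  simp only [List.getElem_append, List.length_append]
  split_ifs <;> first | (exact List.getElem_mem _) | (exfalso; omega)

theorem invGap_main (A B C D : List ℕ) (hB : B ≠ []) (hC : C ≠ [])
    (hmono : ∀ x ∈ B, ∀ y ∈ C, y < x) :
    invGap (A++B++C++D) ≤ invGap (A++C++B++D) + 2 := by
  set L := A++B++C++D with hL
  set L' := A++C++B++D with hL'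
  have hLlen : L.length = A.length + B.length + C.length + D.length := by
    simp [hL, List.length_append]; omega
  have hL'len : L'.length = A.length + B.length + C.length + D.length := by
    simp [hL', List.length_append]; omega
  have hb : 0 < B.length := List.length_pos_iff.mpr hB
  set σ : ℕ → ℕ := fun i => if i < A.length then i
    else if i < A.length + B.length then i + C.length
    else if i < A.length + B.length + C.length then i - B.length else i with hσdef
  have hspec : ∀ i : ℕ, (i < A.length ∧ σ i = i) ∨
      (A.length ≤ i ∧ i < A.length + B.length ∧ σ i = i + C.length) ∨
      (A.length + B.length ≤ i ∧ i < A.length + B.length + C.length ∧ σ i + B.length = i) ∨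
      (A.length + B.length + C.length ≤ i ∧ σ i = i) := by
    intro i
    simp only [hσdef]
    split_ifs <;> omega
  have hσlt : ∀ i : Fin L.length, σ (i : ℕ) < L'.length := by
    intro i
    have hi : (i : ℕ) < A.length + B.length + C.length + D.length := by
      have := i.isLt; omega
    rcases hspec (i : ℕ) with ⟨h1, h2⟩ | ⟨h1, h2, h3⟩ | ⟨h1, h2, h3⟩ | ⟨h1, h2⟩ <;> omega
  have hval : ∀ i : Fin L.length, L'[σ (i : ℕ)]'(hσlt i) = L[(i : ℕ)]'i.isLt := by
    intro i
    exact blockget A B C D i (σ i) i.isLt (hσlt i) (hspec i)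
  unfold invGap
  set S := Finset.univ.filter (fun p : Fin L.length × Fin L.length =>
    (p.2 : ℕ) + 1 < (p.1 : ℕ) ∧ L.get p.1 = L.get p.2 + 1) with hS
  set S' := Finset.univ.filter (fun p : Fin L'.length × Fin L'.length =>
    (p.2 : ℕ) + 1 < (p.1 : ℕ) ∧ L'.get p.1 = L'.get p.2 + 1) with hS'
  have key : ∀ p ∈ S, ¬ (σ (p.2 : ℕ) + 1 < σ (p.1 : ℕ)) →
      (((p.2 : ℕ) + 1 = A.length ∧ (p.1 : ℕ) = A.length + B.length) ∨
       ((p.2 : ℕ) + 1 = A.length + B.length ∧ (p.1 : ℕ) = A.length + B.length + C.length)) := by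
    intro p hp hnot
    rw [hS, Finset.mem_filter] at hp
    obtain ⟨-, h1, h2⟩ := hp
    rcases hspec (p.2 : ℕ) with ⟨g1, g2⟩ | ⟨g1, g2, g3⟩ | ⟨g1, g2, g3⟩ | ⟨g1, g2⟩ <;>
      rcases hspec (p.1 : ℕ) with ⟨f1, f2⟩ | ⟨f1, f2, f3⟩ | ⟨f1, f2, f3⟩ | ⟨f1, f2⟩ <;>
      try omega
    · exfalso
      have hmB : L[(p.2 : ℕ)]'p.2.isLt ∈ B := memBC A B C D _ _ g1 g2
      have hmC : L[(p.1 : ℕ)]'p.1.isLt ∈ C := memCC A B C D _ _ f1 f2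
      have := hmono _ hmB _ hmC
      rw [List.get_eq_getElem, List.get_eq_getElem] at h2
      omega
  have hcard := Finset.card_filter_add_card_filter_not
    (s := S) (p := fun p : Fin L.length × Fin L.length => σ (p.2 : ℕ) + 1 < σ (p.1 : ℕ))
  have part1 : (S.filter (fun p : Fin L.length × Fin L.length =>
      σ (p.2 : ℕ) + 1 < σ (p.1 : ℕ))).card ≤ S'.card := by
    apply Finset.card_le_card_of_injOn
      (fun p => ((⟨σ (p.1 : ℕ), hσlt p.1⟩ : Fin L'.length), (⟨σ (p.2 : ℕ), hσlt p.2⟩ : Fin L'.length)))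
    · intro p hp
      rw [Finset.mem_coe, Finset.mem_filter] at hp
      obtain ⟨hpS, hP⟩ := hp
      rw [hS, Finset.mem_filter] at hpS
      obtain ⟨-, h1, h2⟩ := hpS
      rw [Finset.mem_coe, hS', Finset.mem_filter]
      refine ⟨Finset.mem_univ _, hP, ?_⟩
      simp only [List.get_eq_getElem]
      rw [List.get_eq_getElem, List.get_eq_getElem] at h2
      rw [hval p.1, hval p.2]
      exact h2
    · intro p _ q _ h
      have h1 : σ (p.1 : ℕ) = σ (q.1 : ℕ) := congrArg (fun x => (x.1 : ℕ)) h
      have h2 : σ (p.2 : ℕ) = σ (q.2 : ℕ) := congrArg (fun x => (x.2 : ℕ)) h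
      have inj : ∀ i j : Fin L.length, σ (i : ℕ) = σ (j : ℕ) → (i : ℕ) = (j : ℕ) := by
        intro i j hij
        rcases hspec (i : ℕ) with ⟨g1, g2⟩ | ⟨g1, g2, g3⟩ | ⟨g1, g2, g3⟩ | ⟨g1, g2⟩ <;>
          rcases hspec (j : ℕ) with ⟨f1, f2⟩ | ⟨f1, f2, f3⟩ | ⟨f1, f2, f3⟩ | ⟨f1, f2⟩ <;>
          omega
      exact Prod.ext (Fin.ext (inj _ _ h1)) (Fin.ext (inj _ _ h2))
  have part2 : (S.filter (fun p : Fin L.length × Fin L.length =>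
      ¬ (σ (p.2 : ℕ) + 1 < σ (p.1 : ℕ)))).card ≤ 2 := by
    calc (S.filter (fun p : Fin L.length × Fin L.length =>
        ¬ (σ (p.2 : ℕ) + 1 < σ (p.1 : ℕ)))).card
        ≤ (Finset.univ : Finset Bool).card := by
          apply Finset.card_le_card_of_injOn (fun p => decide ((p.2 : ℕ) + 1 = A.length))
          · intro p _; exact Finset.mem_univ _
          · intro p hp q hq h
            simp only [Finset.coe_filter, Set.mem_setOf_eq] at hp hq
            have kp := key p hp.1 hp.2
            have kq := key q hq.1 hq.2
            simp only [decide_eq_decide] at h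
            have e2 : (p.2 : ℕ) = (q.2 : ℕ) := by omega
            have e1 : (p.1 : ℕ) = (q.1 : ℕ) := by omega
            exact Prod.ext (Fin.ext e1) (Fin.ext e2)
      _ = 2 := by simp
  omega

/-- A monotone block move decreases the number of inverse gaps by at most two. -/
theorem monotone_block_move_invGap (n : ℕ) (l l' : List ℕ)
    (hl : IsPermList n l) (hmove : IsMonotoneBlockMove l l') :
    invGap l ≤ invGap l' + 2 := by
  obtain ⟨A, B, C, D, hB, hC, hmono, rfl, rfl⟩ := hmove
  exact invGap_main A B C D hB hC hmono
end

section
/- Any permutation of n elements can be sorted to the identity using at most bp(π) monotone block moves, where bp(π) is the number of breakpoints; in particular bc(π) ≤ bp(π). -/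
namespace SortAuxBP

/-- Count of adjacent pairs satisfying `p`, starting from a previous element `a`. -/
def cnt (p : ℕ → ℕ → Bool) : ℕ → List ℕ → ℕ
  | _, [] => 0
  | a, b :: t => (if p a b then 1 else 0) + cnt p b t

/-- The last element of `a :: u`. -/
def lst : ℕ → List ℕ → ℕ
  | a, [] => a
  | _, b :: t => lst b t

lemma lst_cons (a b : ℕ) (t : List ℕ) : lst a (b :: t) = lst b t := rfl

lemma cnt_append (p : ℕ → ℕ → Bool) (a : ℕ) (u v : List ℕ) :
    cnt p a (u ++ v) = cnt p a u + cnt p (lst a u) v := by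
  induction u generalizing a with
  | nil => simp [cnt, lst]
  | cons b t ih => simp [cnt, lst, ih, Nat.add_assoc]

lemma lst_mem (a : ℕ) (u : List ℕ) : lst a u ∈ a :: u := by
  induction u generalizing a with
  | nil => simp [lst]
  | cons b t ih =>
    rw [lst_cons]
    rcases List.mem_cons.mp (ih b) with h | h
    · simp [h]
    · simp [h]

lemma zip_countP (p : ℕ → ℕ → Bool) (a : ℕ) (l : List ℕ) :
    (((a :: l).zip l).countP (fun q => p q.1 q.2)) = cnt p a l := by
  induction l generalizing a with
  | nil => simp [cnt]
  | cons b t ih =>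
    rw [List.zip_cons_cons, List.countP_cons]
    simp only [cnt, ih]
    by_cases h : p a b <;> simp [h, Nat.add_comm]

lemma adjCount_eq (p : ℕ → ℕ → Bool) (n : ℕ) (l : List ℕ) :
    adjCount p n l = cnt p 0 (l ++ [n + 1]) := by
  unfold adjCount ext
  rw [List.tail_cons]
  exact zip_countP p 0 (l ++ [n + 1])

lemma idL_eq (n : ℕ) : idL n = List.range' 1 n := by
  induction n with
  | zero => rfl
  | succ n ih =>
    have h1 : List.range' 1 (n + 1) = List.range' 1 n ++ [1 + n] := by
      simpa using List.range'_concat (step := 1) (s := 1) (n := n)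
    rw [h1, ← ih]
    simp [idL, List.range_succ, Nat.add_comm]

/-- breakpoint predicate -/
abbrev bpP : ℕ → ℕ → Bool := fun a b => b ≠ a + 1

lemma cnt_chain (c a : ℕ) : cnt bpP a (List.range' (a + 1) c) = 0 := by
  induction c generalizing a with
  | zero => simp [cnt]
  | succ c ih =>
    rw [List.range'_succ]
    show cnt bpP a ((a+1) :: List.range' (a+1+1) c) = 0
    simp [cnt, ih]

lemma lst_chain (c a : ℕ) : lst a (List.range' (a + 1) c) = a + c := by
  induction c generalizing a with
  | zero => simp [lst]
  | succ c ih =>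
    rw [List.range'_succ]
    show lst a ((a+1) :: List.range' (a+1+1) c) = a + (c+1)
    rw [lst_cons, ih]
    omega

lemma lst_indep (a b : ℕ) (u : List ℕ) (h : u ≠ []) : lst a u = lst b u := by
  cases u with
  | nil => exact absurd rfl h
  | cons c t => rfl

lemma bp_eq (n : ℕ) (l : List ℕ) : bp n l = cnt bpP 0 (l ++ [n + 1]) :=
  adjCount_eq _ n l

lemma mem_idL {n x : ℕ} : x ∈ idL n ↔ 1 ≤ x ∧ x ≤ n := by
  rw [idL_eq, List.mem_range'_1]
  omega

/-- The key step: a non-identity permutation admits a monotone block move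
strictly decreasing the number of breakpoints. -/
lemma step (n : ℕ) (l : List ℕ) (hl : IsPermList n l) (hne : l ≠ idL n) :
    ∃ l', IsMonotoneBlockMove l l' ∧ IsPermList n l' ∧ bp n l' < bp n l := by
  have hlen : l.length = n := by
    have := hl.length_eq
    simpa [idL] using this
  have hnd : l.Nodup := by
    refine hl.nodup_iff.mpr ?_
    rw [idL_eq]
    exact List.nodup_range' (s := 1) (n := n)
  have hmem : ∀ x ∈ l, 1 ≤ x ∧ x ≤ n := fun x hx => mem_idL.mp (hl.mem_iff.mp hx)
  -- find M : the longest prefix [1..M]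
  set P : ℕ → Prop := fun m => l.take m = List.range' 1 m with hP
  have hP0 : P 0 := by simp [hP]
  set M : ℕ := Nat.findGreatest P n with hMdef
  have hMn : M ≤ n := Nat.findGreatest_le n
  have hPM : P M := Nat.findGreatest_spec (Nat.zero_le n) hP0
  have hMlt : M < n := by
    rcases Nat.lt_or_ge M n with h | h
    · exact h
    · exfalso
      have hMn' : M = n := le_antisymm hMn h
      apply hne
      have : l.take n = List.range' 1 n := by rw [← hMn']; exact hPM
      rw [idL_eq, ← this, List.take_of_length_le (le_of_eq hlen)]
  have hnotP : ¬ P (M + 1) := Nat.findGreatest_is_greatest (Nat.lt_succ_self M) hMlt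
  -- decompose l = A ++ r
  set A : List ℕ := List.range' 1 M with hA
  have hAlen : A.length = M := by simp [hA]
  have hlA : l = A ++ l.drop M := by
    conv_lhs => rw [← List.take_append_drop M l]
    rw [hPM]
  -- M+1 is in the dropped part
  have hM1l : (M + 1) ∈ l := hl.mem_iff.mpr (mem_idL.mpr ⟨by omega, by omega⟩)
  have hM1r : (M + 1) ∈ l.drop M := by
    rcases (List.mem_append.mp (hlA ▸ hM1l)) with h | h
    · exfalso
      rw [hA, List.mem_range'_1] at h
      omega
    · exact h
  obtain ⟨X, s, hXs⟩ := List.append_of_mem hM1r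
  have hXne : X ≠ [] := by
    intro hXnil
    apply hnotP
    show l.take (M + 1) = List.range' 1 (M + 1)
    have h1 : l = A ++ (M + 1) :: s := by rw [hlA, hXs, hXnil]; simp
    have hr : List.range' 1 (M + 1) = List.range' 1 M ++ [1 + M] := by
      simpa using List.range'_concat (step := 1) (s := 1) (n := M)
    rw [h1, hr, show M + 1 = A.length + 1 by rw [hAlen], List.take_length_add_append 1, hA]
    simp [Nat.add_comm]
  -- find K : the longest run M+1, M+2, ..., K
  set Q : ℕ → Prop := fun k => ((M + 1) :: s).take (k - M) = List.range' (M + 1) (k - M) with hQ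
  have hQM1 : Q (M + 1) := by
    show ((M + 1) :: s).take (M + 1 - M) = List.range' (M + 1) (M + 1 - M)
    have e : M + 1 - M = 1 := by omega
    rw [e]
    simp [List.range'_one]
  set K : ℕ := Nat.findGreatest Q n with hKdef
  have hKn : K ≤ n := Nat.findGreatest_le n
  have hK1 : M + 1 ≤ K := Nat.le_findGreatest hMlt hQM1
  have hQK : Q K := Nat.findGreatest_spec hMlt hQM1
  set c : ℕ := K - M with hc
  have hc1 : 1 ≤ c := by omega
  set C : List ℕ := List.range' (M + 1) c with hC
  have hClen : C.length = c := by simp [hC]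
  set Y : List ℕ := ((M + 1) :: s).drop c with hY
  have hQK' : ((M + 1) :: s).take c = List.range' (M + 1) c := hQK
  have hCY : (M + 1) :: s = C ++ Y := by
    conv_lhs => rw [← List.take_append_drop c ((M + 1) :: s)]
    rw [hQK']
  have hdecomp : l = A ++ (X ++ (C ++ Y)) := by
    rw [hlA, hXs, hCY]
  -- bounds on elements of X
  have hXbound : ∀ x ∈ X, K + 1 ≤ x ∧ x ≤ n := by
    intro x hx
    have hxl : x ∈ l := by rw [hdecomp]; simp [hx]
    obtain ⟨hx1, hxn⟩ := hmem x hxl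
    have hnd' := hdecomp ▸ hnd
    obtain ⟨-, hnd2, hdisj1⟩ := List.nodup_append'.mp hnd'
    obtain ⟨-, -, hdisj2⟩ := List.nodup_append'.mp hnd2
    have hxA : x ∉ A := fun hxA => hdisj1 hxA (by simp [hx])
    have hxC : x ∉ C := fun hxC => hdisj2 hx (by simp [hxC])
    rw [hA, List.mem_range'_1] at hxA
    rw [hC, List.mem_range'_1] at hxC
    constructor
    · omega
    · exact hxn
  -- K < n
  obtain ⟨x₁, X', rfl⟩ : ∃ a t, X = a :: t := by
    cases X with
    | nil => exact absurd rfl hXne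
    | cons a t => exact ⟨a, t, rfl⟩
  have hx₁ := hXbound x₁ (by simp)
  have hKltn : K < n := by omega
  -- head of Y ++ [n+1] is not K+1
  have hE : ∃ hY' E', Y ++ [n + 1] = hY' :: E' ∧ hY' ≠ K + 1 := by
    rcases hYnil : Y with _ | ⟨h, Y'⟩
    · exact ⟨n + 1, [], rfl, by omega⟩
    · refine ⟨h, Y' ++ [n + 1], rfl, ?_⟩
      intro hcontra
      have hnotQ : ¬ Q (K + 1) := Nat.findGreatest_is_greatest (Nat.lt_succ_self K) (by omega)
      apply hnotQ
      show ((M + 1) :: s).take (K + 1 - M) = List.range' (M + 1) (K + 1 - M)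
      have hck : K + 1 - M = c + 1 := by omega
      have h2 : List.range' (M + 1) (c + 1) = List.range' (M + 1) c ++ [M + 1 + c] := by
        simpa using List.range'_concat (step := 1) (s := M + 1) (n := c)
      rw [hck, hCY, hYnil, h2, ← hC, ← hClen, List.take_length_add_append 1]
      simp [hcontra, hClen]
      omega
  obtain ⟨hd, E', hEeq, hhd⟩ := hE
  -- the move
  refine ⟨A ++ C ++ (x₁ :: X') ++ Y, ⟨A, x₁ :: X', C, Y, hXne, ?_, ?_, by rw [hdecomp]; simp, rfl⟩, ?_, ?_⟩
  · -- C nonempty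
    rw [hC]
    simp
    omega
  · -- monotone
    intro x hx y hy
    rw [hC, List.mem_range'_1] at hy
    have := hXbound x hx
    omega
  · -- perm
    unfold IsPermList
    refine List.Perm.trans ?_ hl
    rw [hdecomp]
    simp only [List.append_assoc]
    exact (List.perm_append_comm_assoc C (x₁ :: X') Y).append_left A
  · -- bp decreases
    set lX : ℕ := lst x₁ X' with hlX
    have hlXmem : lX ∈ x₁ :: X' := lst_mem x₁ X'
    have hlXb := hXbound lX hlXmem
    set C' : List ℕ := List.range' (M + 2) (c - 1) with hC'
    have hCsplit : C = (M + 1) :: C' := by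
      rw [hC, hC']
      obtain ⟨c', hc'⟩ : ∃ c', c = c' + 1 := ⟨c - 1, by omega⟩
      rw [hc', List.range'_succ, show M + 1 + 1 = M + 2 from rfl]
      simp
    rw [hCsplit] at hdecomp ⊢
    -- compute bp of l
    have hbl : bp n l = (if bpP M x₁ then 1 else 0) + cnt bpP x₁ X'
        + (if bpP lX (M + 1) then 1 else 0) + ((if bpP K hd then 1 else 0) + cnt bpP hd E') := by
      rw [bp_eq, hdecomp]
      have e1 : (A ++ (x₁ :: X' ++ ((M + 1) :: C' ++ Y))) ++ [n + 1]
          = A ++ ((x₁ :: (X' ++ ((M + 1) :: (C' ++ (Y ++ [n + 1])))))) := by simp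
      rw [e1, cnt_append]
      have hcntA : cnt bpP 0 A = 0 := by rw [hA]; exact cnt_chain M 0
      have hlstA : lst 0 A = M := by rw [hA]; simpa using lst_chain M 0
      rw [hcntA, hlstA]
      show 0 + ((if bpP M x₁ then 1 else 0) + cnt bpP x₁ (X' ++ ((M + 1) :: (C' ++ (Y ++ [n+1]))))) = _
      rw [cnt_append, ← hlX]
      show 0 + ((if bpP M x₁ then 1 else 0) + (cnt bpP x₁ X' +
        ((if bpP lX (M+1) then 1 else 0) + cnt bpP (M + 1) (C' ++ (Y ++ [n+1]))))) = _
      rw [cnt_append]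
      have hcntC' : cnt bpP (M + 1) C' = 0 := by
        rw [hC']
        have : M + 2 = (M + 1) + 1 := rfl
        rw [this]
        exact cnt_chain (c - 1) (M + 1)
      have hlstC' : lst (M + 1) C' = K := by
        rw [hC', show M + 2 = (M + 1) + 1 from rfl, lst_chain (c - 1) (M + 1)]
        omega
      rw [hcntC', hlstC', hEeq]
      show 0 + ((if bpP M x₁ then 1 else 0) + (cnt bpP x₁ X' +
        ((if bpP lX (M+1) then 1 else 0) + (0 + ((if bpP K hd then 1 else 0) + cnt bpP hd E'))))) = _
      ring
    -- compute bp of l'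
    have hbl' : bp n (A ++ ((M + 1) :: C') ++ (x₁ :: X') ++ Y)
        = (if bpP K x₁ then 1 else 0) + cnt bpP x₁ X'
          + ((if bpP lX hd then 1 else 0) + cnt bpP hd E') := by
      rw [bp_eq]
      have e1 : (A ++ ((M + 1) :: C') ++ (x₁ :: X') ++ Y) ++ [n + 1]
          = A ++ (((M + 1) :: C') ++ (x₁ :: (X' ++ (Y ++ [n + 1])))) := by simp
      rw [e1, cnt_append]
      have hcntA : cnt bpP 0 A = 0 := by rw [hA]; exact cnt_chain M 0
      have hlstA : lst 0 A = M := by rw [hA]; simpa using lst_chain M 0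
      rw [hcntA, hlstA, cnt_append]
      have hcntC : cnt bpP M ((M + 1) :: C') = 0 := by
        rw [← hCsplit, hC]
        exact cnt_chain c M
      have hlstC : lst M ((M + 1) :: C') = K := by
        rw [← hCsplit, hC, lst_chain c M]
        omega
      rw [hcntC, hlstC]
      show 0 + (0 + ((if bpP K x₁ then 1 else 0) + cnt bpP x₁ (X' ++ (Y ++ [n + 1])))) = _
      rw [cnt_append, ← hlX, hEeq]
      show 0 + (0 + ((if bpP K x₁ then 1 else 0) + (cnt bpP x₁ X' +
        ((if bpP lX hd then 1 else 0) + cnt bpP hd E')))) = _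
      ring
    rw [hbl, hbl']
    have b1 : (if bpP M x₁ then 1 else 0) = 1 := by
      simp [bpP]
      omega
    have b2 : (if bpP lX (M + 1) then 1 else 0) = 1 := by
      simp [bpP]
      omega
    have b3 : (if bpP K hd then 1 else 0) = 1 := by
      simp [bpP]
      omega
    have b4 : (if bpP K x₁ then 1 else 0) ≤ 1 := by split <;> omega
    have b5 : (if bpP lX hd then 1 else 0) ≤ 1 := by split <;> omega
    omega

lemma main (n : ℕ) : ∀ b l, IsPermList n l → bp n l = b →
    ∃ t ≤ b, SortsIn IsMonotoneBlockMove l (idL n) t := by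
  intro b
  induction b using Nat.strong_induction_on with
  | _ b ih =>
    intro l hl hb
    by_cases hne : l = idL n
    · exact ⟨0, Nat.zero_le b, fun _ => idL n, by rw [hne], rfl, by omega⟩
    · obtain ⟨l', hmove, hl', hlt⟩ := step n l hl hne
      rw [hb] at hlt
      obtain ⟨t', ht', c', hc0, hct, hcR⟩ := ih (bp n l') hlt l' hl' rfl
      refine ⟨t' + 1, by omega, fun i => if i = 0 then l else c' (i - 1), by simp, ?_, ?_⟩
      · simp [hct]
      · intro i hi
        cases i with
        | zero => simpa [hc0] using hmove
        | succ j =>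
          simp only [Nat.succ_ne_zero, if_false, Nat.add_sub_cancel, Nat.succ_sub_one]
          exact hcR j (by omega)

end SortAuxBP


/-- Any permutation can be sorted to the identity with at most `bp(π)`
monotone block moves; in particular `bc(π) ≤ bp(π)`. -/
theorem sorting_upper_bound_bp (n : ℕ) (l : List ℕ) (hl : IsPermList n l) :
    ∃ t ≤ bp n l, SortsIn IsMonotoneBlockMove l (idL n) t :=
  SortAuxBP.main n (bp n l) l hl rfl
end

section
/- If σ is a single-element block move applied to a permutation π (i.e., a block move in which one of the two exchanged blocks has size one), then lis(σπ) ≤ lis(π) + 1, where lis denotes the length of the longest increasing subsequence. -/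
lemma foldr_max_le {L : List ℕ} {m : ℕ} (h : ∀ x ∈ L, x ≤ m) : L.foldr max 0 ≤ m := by
  induction L with
  | nil => simp
  | cons a t ih =>
    simp only [List.foldr_cons, max_le_iff]
    exact ⟨h a (by simp), ih fun x hx => h x (by simp [hx])⟩

lemma le_foldr_max {L : List ℕ} {x : ℕ} (h : x ∈ L) : x ≤ L.foldr max 0 := by
  induction L with
  | nil => simp at h
  | cons a t ih =>
    rcases List.mem_cons.mp h with h | h
    · simp [h]
    · exact le_trans (ih h) (le_max_right _ _)

lemma lis_le {l : List ℕ} {m : ℕ}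
    (h : ∀ s, s.Sublist l → List.IsChain (· < ·) s → s.length ≤ m) : lis l ≤ m := by
  apply foldr_max_le
  intro x hx
  simp only [List.mem_map, List.mem_filter, List.mem_sublists, decide_eq_true_eq] at hx
  obtain ⟨s, ⟨hs, hc⟩, rfl⟩ := hx
  exact h s hs hc

lemma le_lis {l s : List ℕ} (hs : s.Sublist l) (hc : List.IsChain (· < ·) s) :
    s.length ≤ lis l := by
  apply le_foldr_max
  simp only [List.mem_map, List.mem_filter, List.mem_sublists, decide_eq_true_eq]
  exact ⟨s, ⟨hs, hc⟩, rfl⟩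

lemma lis_mono {l₁ l₂ : List ℕ} (h : l₁.Sublist l₂) : lis l₁ ≤ lis l₂ :=
  lis_le fun s hs hc => le_lis (hs.trans h) hc

lemma lis_middle (X : List ℕ) (b : ℕ) (Y : List ℕ) :
    lis (X ++ b :: Y) ≤ lis (X ++ Y) + 1 := by
  apply lis_le
  intro s hs hc
  rw [List.sublist_append_iff] at hs
  obtain ⟨s₁, s₂, rfl, h₁, h₂⟩ := hs
  rcases List.sublist_cons_iff.mp h₂ with h₂ | ⟨r, rfl, hr⟩
  · have : (s₁ ++ s₂).length ≤ lis (X ++ Y) :=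
      le_lis (List.Sublist.append h₁ h₂) hc
    omega
  · have hsub : (s₁ ++ r).Sublist (s₁ ++ b :: r) :=
      (List.sublist_cons_self b r).append_left s₁
    have hc' : List.IsChain (· < ·) (s₁ ++ r) := hc.sublist hsub
    have : (s₁ ++ r).length ≤ lis (X ++ Y) :=
      le_lis (List.Sublist.append h₁ hr) hc'
    simp only [List.length_append, List.length_cons] at *
    omega

/-- A single-element block move increases the length of the longest
increasing subsequence by at most one. -/
theorem single_block_move_lis (n : ℕ) (l l' : List ℕ)
    (hl : IsPermList n l) (hmove : IsSingleBlockMove l l') :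
    lis l' ≤ lis l + 1 := by
  obtain ⟨A, B, C, D, hB, hC, hlen, rfl, rfl⟩ := hmove
  rcases hlen with h1 | h1
  · obtain ⟨b, rfl⟩ := List.length_eq_one_iff.mp h1
    have e : A ++ C ++ [b] ++ D = (A ++ C) ++ b :: D := by simp
    rw [e]
    calc lis ((A ++ C) ++ b :: D) ≤ lis ((A ++ C) ++ D) + 1 := lis_middle _ _ _
      _ ≤ lis (A ++ [b] ++ C ++ D) + 1 := by
          apply Nat.add_le_add_right
          apply lis_mono
          have : A ++ [b] ++ C ++ D = A ++ (b :: (C ++ D)) := by simp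
          rw [this, List.append_assoc]
          exact ((List.sublist_cons_self b (C ++ D)).append_left A)
  · obtain ⟨c, rfl⟩ := List.length_eq_one_iff.mp h1
    have e : A ++ [c] ++ B ++ D = A ++ c :: (B ++ D) := by simp
    rw [e]
    calc lis (A ++ c :: (B ++ D)) ≤ lis (A ++ (B ++ D)) + 1 := lis_middle _ _ _
      _ ≤ lis (A ++ B ++ [c] ++ D) + 1 := by
          apply Nat.add_le_add_right
          apply lis_mono
          have : A ++ B ++ [c] ++ D = A ++ (B ++ c :: D) := by simp
          rw [this]
          exact ((List.sublist_cons_self c D).append_left B).append_left A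
end

section
/- Any permutation π of n elements can be sorted to the identity by at most n − lis(π) monotone block moves. -/
section Aux
open List

private lemma foldr_max_eq_zero_or_mem : ∀ L : List ℕ, L.foldr max 0 = 0 ∨ L.foldr max 0 ∈ L := by
  intro L
  induction L with
  | nil => left; rfl
  | cons a L ih =>
    rcases le_total a (L.foldr max 0) with h | h
    · rw [List.foldr_cons, max_eq_right h]
      rcases ih with h0 | hm
      · left; exact h0
      · right; exact mem_cons_of_mem _ hm
    · rw [List.foldr_cons, max_eq_left h]
      right; exact mem_cons_self

private lemma lis_spec (l : List ℕ) :
    ∃ s : List ℕ, s.Sublist l ∧ List.Chain' (· < ·) s ∧ lis l = s.length := by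
  rcases foldr_max_eq_zero_or_mem
      ((l.sublists.filter (fun s => decide (List.IsChain (· < ·) s))).map List.length) with h0 | hm
  · exact ⟨[], nil_sublist l, List.isChain_nil, h0⟩
  · obtain ⟨s, hs, hlen⟩ := List.mem_map.1 hm
    obtain ⟨hmem, hdec⟩ := List.mem_filter.1 hs
    exact ⟨s, List.mem_sublists.1 hmem, (of_decide_eq_true hdec : List.IsChain (· < ·) s), hlen.symm⟩

/-- order contradiction: if `a` appears in the right part and `b` in the left part of a
nodup list, then `[a,b]` is not a sublist. -/
private lemma not_pair_sublist {l X Y : List ℕ} {a b : ℕ} (hn : l.Nodup) (hl : l = X ++ Y)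
    (ha : a ∈ Y) (hb : b ∈ X) : ¬ [a, b].Sublist l := by
  intro hs
  rw [hl] at hs hn
  rw [List.nodup_append] at hn
  obtain ⟨-, -, hdisj⟩ := hn
  rw [List.sublist_append_iff] at hs
  obtain ⟨T₁, T₂, hT, h1, h2⟩ := hs
  cases T₁ with
  | nil =>
    simp only [List.nil_append] at hT
    subst hT
    exact hdisj b hb b (h2.subset (by simp)) rfl
  | cons x T₁ =>
    cases T₁ with
    | nil =>
      simp only [List.cons_append, List.nil_append, List.cons.injEq] at hT
      obtain ⟨rfl, -⟩ := hT
      exact hdisj a (h1.subset (by simp)) a ha rfl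
    | cons y T₁ =>
      simp only [List.cons_append, List.cons.injEq] at hT
      obtain ⟨rfl, -, -⟩ := hT
      exact hdisj a (h1.subset (by simp)) a ha rfl

/-- if `a ∈ X` and `b ∈ Y` then `[a,b]` is a sublist of `X ++ Y`. -/
private lemma pair_sublist {X Y : List ℕ} {a b : ℕ} (ha : a ∈ X) (hb : b ∈ Y) :
    [a, b].Sublist (X ++ Y) := by
  have h1 : [a].Sublist X := List.singleton_sublist.2 ha
  have h2 : [b].Sublist Y := List.singleton_sublist.2 hb
  exact h1.append h2

private lemma sublist_left_of_notmem_right {T X Y : List ℕ} (h : T.Sublist (X ++ Y))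
    (hnot : ∀ t ∈ T, t ∉ Y) : T.Sublist X := by
  rw [List.sublist_append_iff] at h
  obtain ⟨T₁, T₂, rfl, h1, h2⟩ := h
  cases T₂ with
  | nil => simpa using h1
  | cons t T₂ =>
    exact absurd (h2.subset mem_cons_self) (hnot t (by simp))

private lemma sublist_right_of_notmem_left {T X Y : List ℕ} (h : T.Sublist (X ++ Y))
    (hnot : ∀ t ∈ T, t ∉ X) : T.Sublist Y := by
  rw [List.sublist_append_iff] at h
  obtain ⟨T₁, T₂, rfl, h1, h2⟩ := h
  cases T₁ with
  | nil => simpa using h2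
  | cons t T₁ =>
    exact absurd (h1.subset mem_cons_self) (hnot t (by simp))

private lemma sublist_append_of_notmem_mid {T X Y : List ℕ} {u : ℕ}
    (h : T.Sublist (X ++ u :: Y)) (hu : u ∉ T) : T.Sublist (X ++ Y) := by
  rw [List.sublist_append_iff] at h
  obtain ⟨T₁, T₂, rfl, h1, h2⟩ := h
  have h2' : T₂.Sublist Y := by
    cases h2 with
    | cons _ h => exact h
    | cons_cons _ h => exact absurd (by simp) hu
  exact h1.append h2'

/-- pair of elements of a strictly increasing list in value-order is a sublist. -/
private lemma pair_sublist_of_chain {S : List ℕ} {a b : ℕ} (hc : List.Chain' (· < ·) S)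
    (ha : a ∈ S) (hb : b ∈ S) (hab : a < b) : [a, b].Sublist S := by
  have hp : S.Pairwise (· < ·) := List.isChain_iff_pairwise.1 hc
  obtain ⟨X, Y, rfl⟩ := List.append_of_mem ha
  rcases List.mem_append.1 hb with hbX | hbY
  · rw [List.pairwise_append] at hp
    exact absurd (hp.2.2 b hbX a (by simp)) (by omega)
  · rcases List.mem_cons.1 hbY with rfl | hbY
    · omega
    · calc [a, b] = [] ++ a :: [b] := by simp
      _ <+ X ++ a :: Y := by
          exact List.Sublist.append (List.nil_sublist X)
            (List.Sublist.cons₂ a (List.singleton_sublist.2 hbY))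

/-- split a strictly increasing list at a value `u ∉ S`. -/
private lemma chain_split (S : List ℕ) (u : ℕ) (hc : List.Chain' (· < ·) S) (hu : u ∉ S) :
    ∃ S₁ S₂ : List ℕ, S = S₁ ++ S₂ ∧ (∀ a ∈ S₁, a < u) ∧ (∀ b ∈ S₂, u < b) := by
  induction S with
  | nil => exact ⟨[], [], by simp, by simp, by simp⟩
  | cons s S ih =>
    have hc' : List.Chain' (· < ·) S := hc.tail
    have hu' : u ∉ S := fun h => hu (mem_cons_of_mem _ h)
    rcases lt_trichotomy s u with hs | hs | hs
    · obtain ⟨S₁, S₂, hsplit, h1, h2⟩ := ih hc' hu'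
      refine ⟨s :: S₁, S₂, by rw [hsplit]; rfl, ?_, h2⟩
      intro a ha
      rcases List.mem_cons.1 ha with rfl | ha
      · exact hs
      · exact h1 a ha
    · exact absurd (hs ▸ mem_cons_self (a := s) (l := S)) hu
    · refine ⟨[], s :: S, by simp, by simp, ?_⟩
      intro b hb
      rcases List.mem_cons.1 hb with rfl | hb
      · exact hs
      · have hp := List.isChain_iff_pairwise.1 hc
        exact hs.trans (List.rel_of_pairwise_cons hp hb)

/-- merge: insert `u` between the two halves keeping the chain. -/
private lemma chain_insert {S₁ S₂ : List ℕ} {u : ℕ} (hc : List.Chain' (· < ·) (S₁ ++ S₂))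
    (h1 : ∀ a ∈ S₁, a < u) (h2 : ∀ b ∈ S₂, u < b) :
    List.Chain' (· < ·) (S₁ ++ u :: S₂) := by
  unfold List.Chain' at hc ⊢
  rw [List.isChain_iff_pairwise] at hc ⊢
  rw [List.pairwise_append] at hc ⊢
  obtain ⟨hS₁, hS₂, hcross⟩ := hc
  refine ⟨hS₁, ?_, ?_⟩
  · rw [List.pairwise_cons]
    exact ⟨h2, hS₂⟩
  · intro a ha b hb
    rcases List.mem_cons.1 hb with rfl | hb
    · exact h1 a ha
    · exact hcross a ha b hb

/-- decomposition at the first element satisfying `p`. -/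
private lemma first_split {l : List ℕ} {p : ℕ → Prop} (h : ∃ x ∈ l, p x) :
    ∃ P u Q, l = P ++ u :: Q ∧ p u ∧ ∀ x ∈ P, ¬ p x := by
  induction l with
  | nil => simp at h
  | cons a l ih =>
    by_cases hp : p a
    · exact ⟨[], a, l, by simp, hp, by simp⟩
    · have h' : ∃ x ∈ l, p x := by
        obtain ⟨x, hx, hpx⟩ := h
        rcases List.mem_cons.1 hx with rfl | hx
        · exact absurd hpx hp
        · exact ⟨x, hx, hpx⟩
      obtain ⟨P, u, Q, rfl, hu, hP⟩ := ih h'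
      refine ⟨a :: P, u, Q, by simp, hu, ?_⟩
      intro x hx
      rcases List.mem_cons.1 hx with rfl | hx
      · exact hp
      · exact hP x hx

/-- decomposition at the last element satisfying `p`. -/
private lemma last_split {l : List ℕ} {p : ℕ → Prop} (h : ∃ x ∈ l, p x) :
    ∃ P u Q, l = P ++ u :: Q ∧ p u ∧ ∀ x ∈ Q, ¬ p x := by
  induction l with
  | nil => simp at h
  | cons a l ih =>
    by_cases h' : ∃ x ∈ l, p x
    · obtain ⟨P, u, Q, rfl, hu, hQ⟩ := ih h'
      exact ⟨a :: P, u, Q, by simp, hu, hQ⟩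
    · push_neg at h'
      obtain ⟨x, hx, hpx⟩ := h
      rcases List.mem_cons.1 hx with rfl | hx
      · exact ⟨[], x, l, by simp, hpx, h'⟩
      · exact absurd hpx (h' x hx)

/-- maximal suffix of elements `> u`. -/
private lemma suffix_split (P : List ℕ) (u : ℕ) :
    ∃ A B : List ℕ, P = A ++ B ∧ (∀ b ∈ B, u < b) ∧
      (∀ A₀ a, A = A₀ ++ [a] → ¬ u < a) := by
  induction P using List.reverseRecOn with
  | nil => exact ⟨[], [], by simp, by simp, by intro A₀ a h; simp at h⟩
  | append_singleton P x ih =>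
    by_cases hx : u < x
    · obtain ⟨A, B, rfl, hB, hA⟩ := ih
      refine ⟨A, B ++ [x], by simp, ?_, hA⟩
      intro b hb
      rcases List.mem_append.1 hb with hb | hb
      · exact hB b hb
      · simpa using (List.mem_singleton.1 hb) ▸ hx
    · refine ⟨P ++ [x], [], by simp, by simp, ?_⟩
      intro A₀ a h
      have hax : a = x := by
        have h2 := congrArg (fun t => t.getLast?) h
        exact (by simpa using h2 : x = a).symm
      exact hax ▸ hx

/-- maximal prefix of elements `< u`. -/
private lemma prefix_split (Q : List ℕ) (u : ℕ) :
    ∃ B D : List ℕ, Q = B ++ D ∧ (∀ b ∈ B, b < u) ∧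
      (∀ d D', D = d :: D' → ¬ d < u) := by
  induction Q with
  | nil => exact ⟨[], [], by simp, by simp, by intro d D' h; simp at h⟩
  | cons x Q ih =>
    by_cases hx : x < u
    · obtain ⟨B, D, rfl, hB, hD⟩ := ih
      refine ⟨x :: B, D, by simp, ?_, hD⟩
      intro b hb
      rcases List.mem_cons.1 hb with rfl | hb
      · exact hx
      · exact hB b hb
    · exact ⟨[], x :: Q, by simp, by simp, by intro d D' h; cases h; exact hx⟩

end Aux

section Step
open List

private lemma mem_cases {l P Q : List ℕ} {u x : ℕ} (hl : l = P ++ u :: Q) (hx : x ∈ l) :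
    x ∈ P ∨ x = u ∨ x ∈ Q := by
  subst hl
  simpa [List.mem_append, List.mem_cons] using hx

private lemma nodup_split {l P Q : List ℕ} {u : ℕ} (hn : l.Nodup) (hl : l = P ++ u :: Q) :
    u ∉ P ∧ u ∉ Q := by
  subst hl
  rw [List.nodup_append] at hn
  obtain ⟨-, hQ, hdisj⟩ := hn
  exact ⟨fun h => hdisj u h u mem_cons_self rfl, (List.nodup_cons.1 hQ).1⟩

private lemma moveL {A B D : List ℕ} {u : ℕ} (hB : B ≠ []) (hBu : ∀ b ∈ B, u < b) :
    IsMonotoneBlockMove (A ++ B ++ u :: D) (A ++ u :: (B ++ D)) ∧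
      (A ++ B ++ u :: D).Perm (A ++ u :: (B ++ D)) := by
  constructor
  · refine ⟨A, B, [u], D, hB, by simp, ?_, by simp, by simp⟩
    intro x hx y hy
    rw [List.mem_singleton] at hy
    subst hy
    exact hBu x hx
  · calc A ++ B ++ u :: D = A ++ (B ++ u :: D) := by simp
    _ ~ A ++ (u :: (B ++ D)) := List.Perm.append_left A List.perm_middle

private lemma moveR {A B D : List ℕ} {u : ℕ} (hB : B ≠ []) (hBu : ∀ b ∈ B, b < u) :
    IsMonotoneBlockMove (A ++ u :: (B ++ D)) (A ++ B ++ u :: D) ∧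
      (A ++ u :: (B ++ D)).Perm (A ++ B ++ u :: D) := by
  constructor
  · refine ⟨A, [u], B, D, by simp, hB, ?_, by simp, by simp⟩
    intro x hx y hy
    rw [List.mem_singleton] at hx
    subst hx
    exact hBu y hy
  · calc A ++ u :: (B ++ D) ~ A ++ (B ++ u :: D) :=
        List.Perm.append_left A List.perm_middle.symm
    _ = A ++ B ++ u :: D := by simp

private lemma exists_step {l S : List ℕ} (hn : l.Nodup) (hS : S.Sublist l)
    (hc : List.Chain' (· < ·) S) (hlt : S.length < l.length) :
    ∃ S' : List ℕ, List.Chain' (· < ·) S' ∧ S'.length = S.length + 1 ∧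
      (S'.Sublist l ∨ ∃ l', IsMonotoneBlockMove l l' ∧ l.Perm l' ∧ S'.Sublist l') := by
  classical
  -- there is a missing element
  have hmiss : ∃ u ∈ l, u ∉ S := by
    by_contra h
    push_neg at h
    have hsub : l ⊆ S := fun x hx => h x hx
    have := (List.Nodup.subperm hn hsub).length_le
    omega
  -- case B / case C predicates
  set caseB : ℕ → Prop := fun u => ∃ s ∈ S, u < s ∧ [s, u].Sublist l with hcaseB
  set caseC : ℕ → Prop := fun u => ∃ s ∈ S, s < u ∧ [u, s].Sublist l with hcaseC
  -- incompatibility of caseB and caseC for a missing u (given a split of l at u)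
  have hBC : ∀ (P Q : List ℕ) (u : ℕ), l = P ++ u :: Q → u ∉ S → caseB u → caseC u → False := by
    intro P Q u hl huS h2 h3
    obtain ⟨huP, huQ⟩ := nodup_split hn hl
    obtain ⟨s₂, hs₂S, hus₂, hsub₂⟩ := h2
    obtain ⟨s₁, hs₁S, hs₁u, hsub₁⟩ := h3
    have hs₂P : s₂ ∈ P := by
      rcases mem_cases hl (hsub₂.subset (show s₂ ∈ [s₂, u] by simp)) with h | h | h
      · exact h
      · omega
      · exact absurd hsub₂ (not_pair_sublist (a := s₂) (b := u) hn
          (show l = (P ++ [u]) ++ Q by rw [hl]; simp) h (by simp))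
    have hs₁Q : s₁ ∈ Q := by
      rcases mem_cases hl (hsub₁.subset (show s₁ ∈ [u, s₁] by simp)) with h | h | h
      · exact absurd hsub₁ (not_pair_sublist (a := u) (b := s₁) hn hl (by simp) h)
      · omega
      · exact h
    have hp : [s₁, s₂].Sublist l :=
      (pair_sublist_of_chain hc hs₁S hs₂S (by omega)).trans hS
    exact absurd hp (not_pair_sublist (a := s₁) (b := s₂) hn hl (mem_cons_of_mem _ hs₁Q) hs₂P)
  by_cases hB : ∃ u ∈ l, u ∉ S ∧ caseB u
  · -- Branch 1: take the FIRST missing caseB element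
    obtain ⟨P, u, Q, hl, ⟨huS, hBu⟩, hPfirst⟩ :=
      first_split (p := fun x => x ∉ S ∧ caseB x)
        (by obtain ⟨u, hul, h1, h2⟩ := hB; exact ⟨u, hul, h1, h2⟩)
    obtain ⟨huP, huQ⟩ := nodup_split hn hl
    obtain ⟨S₁, S₂, hSsplit, hS₁lt, hS₂gt⟩ := chain_split S u hc huS
    have hCu : ¬ caseC u := fun h => hBC P Q u hl huS hBu h
    obtain ⟨A, B, hPsplit, hBbig, hAlast⟩ := suffix_split P u
    -- no element of S₂ lies in A
    have hA : ∀ t ∈ S₂, t ∉ A := by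
      intro t htS₂ htA
      have htu : u < t := hS₂gt t htS₂
      have htS : t ∈ S := hSsplit ▸ List.mem_append_right _ htS₂
      have hAne : A ≠ [] := by rintro rfl; simp at htA
      have hAdecomp : A.dropLast ++ [A.getLast hAne] = A := List.dropLast_append_getLast hAne
      set a := A.getLast hAne with ha_def
      have hau : ¬ u < a := hAlast A.dropLast a hAdecomp.symm
      have haP : a ∈ P := hPsplit ▸ List.mem_append_left _ (List.getLast_mem hAne)
      have hane : a ≠ u := fun h => huP (h ▸ haP)
      have halt : a < u := by omega
      have hlX : l = A.dropLast ++ (a :: (B ++ u :: Q)) := by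
        rw [hl, hPsplit, ← hAdecomp]; simp
      have htdrop : t ∈ A.dropLast := by
        rw [← hAdecomp] at htA
        rcases List.mem_append.1 htA with h | h
        · exact h
        · rw [List.mem_singleton] at h; omega
      by_cases haS : a ∈ S
      · have hp : [a, t].Sublist l :=
          (pair_sublist_of_chain hc haS htS (by omega)).trans hS
        exact absurd hp (not_pair_sublist (a := a) (b := t) hn hlX (by simp) htdrop)
      · have : caseB a := ⟨t, htS, by omega, by
          rw [hlX]; exact pair_sublist htdrop (by simp)⟩
        exact hPfirst a haP ⟨haS, this⟩
    -- S₁ is a sublist of A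
    have hS₁l : S₁.Sublist l := (hSsplit ▸ List.sublist_append_left S₁ S₂).trans hS
    have hS₁P : S₁.Sublist P := by
      refine sublist_left_of_notmem_right (hl ▸ hS₁l) ?_
      intro t htS₁ htuQ
      rcases List.mem_cons.1 htuQ with rfl | htQ
      · exact absurd (hS₁lt t htS₁) (lt_irrefl _)
      · refine hCu ⟨t, hSsplit ▸ List.mem_append_left _ htS₁, hS₁lt t htS₁, ?_⟩
        rw [hl, show P ++ u :: Q = (P ++ [u]) ++ Q by simp]
        exact pair_sublist (by simp) htQ
    have hS₁A : S₁.Sublist A := by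
      refine sublist_left_of_notmem_right (hPsplit ▸ hS₁P) ?_
      intro t htS₁ htB
      have := hBbig t htB
      have := hS₁lt t htS₁
      omega
    -- S₂ is a sublist of B ++ Q
    have hS₂l : S₂.Sublist l := (hSsplit ▸ List.sublist_append_right S₁ S₂).trans hS
    have hS₂BQ : S₂.Sublist (B ++ Q) := by
      have h1 : S₂.Sublist (B ++ u :: Q) := by
        refine sublist_right_of_notmem_left
          (show S₂.Sublist (A ++ (B ++ u :: Q)) by rw [← List.append_assoc, ← hPsplit, ← hl]; exact hS₂l) hA
      refine sublist_append_of_notmem_mid h1 ?_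
      intro huS₂
      exact absurd (hS₂gt u huS₂) (lt_irrefl _)
    -- B is nonempty
    have hBne : B ≠ [] := by
      obtain ⟨s₂, hs₂S, hus₂, hsub₂⟩ := hBu
      have hs₂P : s₂ ∈ P := by
        rcases mem_cases hl (hsub₂.subset (show s₂ ∈ [s₂, u] by simp)) with h | h | h
        · exact h
        · omega
        · exact absurd hsub₂ (not_pair_sublist (a := s₂) (b := u) hn
            (show l = (P ++ [u]) ++ Q by rw [hl]; simp) h (by simp))
      have hs₂S₂ : s₂ ∈ S₂ := by
        rcases List.mem_append.1 (hSsplit ▸ hs₂S) with h | h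
        · have := hS₁lt s₂ h; omega
        · exact h
      have hs₂B : s₂ ∈ B := by
        rcases List.mem_append.1 (hPsplit ▸ hs₂P) with h | h
        · exact absurd h (hA s₂ hs₂S₂)
        · exact h
      rintro rfl
      simp at hs₂B
    -- conclude with the move
    obtain ⟨hmove, hperm⟩ := moveL (A := A) (B := B) (D := Q) (u := u) hBne hBbig
    have hlform : l = A ++ B ++ u :: Q := by rw [hl, hPsplit]
    refine ⟨S₁ ++ u :: S₂, ?_, ?_, Or.inr ⟨A ++ u :: (B ++ Q), ?_, ?_, ?_⟩⟩
    · exact chain_insert (hSsplit ▸ hc) hS₁lt hS₂gt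
    · have := congrArg List.length hSsplit
      simp only [List.length_append, List.length_cons] at *
      omega
    · rw [hlform]; exact hmove
    · rw [hlform]; exact hperm
    · exact List.Sublist.append hS₁A (List.Sublist.cons₂ u hS₂BQ)
  · by_cases hC : ∃ u ∈ l, u ∉ S ∧ caseC u
    · -- Branch 2: take the LAST missing caseC element
      obtain ⟨P, u, Q, hl, ⟨huS, hCu⟩, hQlast⟩ :=
        last_split (p := fun x => x ∉ S ∧ caseC x)
          (by obtain ⟨u, hul, h1, h2⟩ := hC; exact ⟨u, hul, h1, h2⟩)
      obtain ⟨huP, huQ⟩ := nodup_split hn hl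
      obtain ⟨S₁, S₂, hSsplit, hS₁lt, hS₂gt⟩ := chain_split S u hc huS
      have hBu : ¬ caseB u := fun h => hBC P Q u hl huS h hCu
      obtain ⟨B, D, hQsplit, hBsmall, hDhead⟩ := prefix_split Q u
      -- no element of S₁ lies in D
      have hD : ∀ t ∈ S₁, t ∉ D := by
        intro t htS₁ htD
        have htu : t < u := hS₁lt t htS₁
        have htS : t ∈ S := hSsplit ▸ List.mem_append_left _ htS₁
        obtain ⟨d, D', rfl⟩ : ∃ d D', D = d :: D' := by
          cases D with
          | nil => simp at htD
          | cons d D' => exact ⟨d, D', rfl⟩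
        have hdu : ¬ d < u := hDhead d D' rfl
        have hdQ : d ∈ Q := hQsplit ▸ List.mem_append_right _ (by simp)
        have hdne : d ≠ u := fun h => huQ (h ▸ hdQ)
        have hdgt : u < d := by omega
        have hlX : l = (P ++ u :: (B ++ [d])) ++ D' := by
          rw [hl, hQsplit]; simp
        have htD' : t ∈ D' := by
          rcases List.mem_cons.1 htD with rfl | h
          · omega
          · exact h
        by_cases hdS : d ∈ S
        · have hp : [t, d].Sublist l :=
            (pair_sublist_of_chain hc htS hdS (by omega)).trans hS
          exact absurd hp (not_pair_sublist (a := t) (b := d) hn hlX htD' (by simp))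
        · have : caseC d := ⟨t, htS, by omega, by
            rw [hlX]; exact pair_sublist (by simp) htD'⟩
          exact hQlast d hdQ ⟨hdS, this⟩
      -- S₁ is a sublist of P ++ B
      have hS₁l : S₁.Sublist l := (hSsplit ▸ List.sublist_append_left S₁ S₂).trans hS
      have hS₁PB : S₁.Sublist (P ++ B) := by
        have h1 : S₁.Sublist (P ++ u :: B) := by
          refine sublist_left_of_notmem_right
            (show S₁.Sublist ((P ++ u :: B) ++ D) by
              rw [show (P ++ u :: B) ++ D = P ++ u :: (B ++ D) by simp, ← hQsplit, ← hl]
              exact hS₁l) hD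
        refine sublist_append_of_notmem_mid h1 ?_
        intro huS₁
        exact absurd (hS₁lt u huS₁) (lt_irrefl _)
      -- S₂ is a sublist of D
      have hS₂l : S₂.Sublist l := (hSsplit ▸ List.sublist_append_right S₁ S₂).trans hS
      have hS₂uBD : S₂.Sublist (u :: (B ++ D)) := by
        refine sublist_right_of_notmem_left (show S₂.Sublist (P ++ u :: (B ++ D)) by
          rw [← hQsplit, ← hl]; exact hS₂l) ?_
        intro t htS₂ htP
        refine hBu ⟨t, hSsplit ▸ List.mem_append_right _ htS₂, hS₂gt t htS₂, ?_⟩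
        rw [hl]
        exact pair_sublist htP (by simp)
      have hS₂D : S₂.Sublist D := by
        have h1 : S₂.Sublist (B ++ D) := by
          have := sublist_append_of_notmem_mid (X := ([] : List ℕ))
            (by simpa using hS₂uBD)
            (show u ∉ S₂ from fun h => absurd (hS₂gt u h) (lt_irrefl _))
          simpa using this
        refine sublist_right_of_notmem_left h1 ?_
        intro t htS₂ htB
        have := hBsmall t htB
        have := hS₂gt t htS₂
        omega
      -- B is nonempty
      have hBne : B ≠ [] := by
        obtain ⟨s₁, hs₁S, hs₁u, hsub₁⟩ := hCu
        have hs₁Q : s₁ ∈ Q := by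
          rcases mem_cases hl (hsub₁.subset (show s₁ ∈ [u, s₁] by simp)) with h | h | h
          · exact absurd hsub₁ (not_pair_sublist (a := u) (b := s₁) hn hl (by simp) h)
          · omega
          · exact h
        have hs₁S₁ : s₁ ∈ S₁ := by
          rcases List.mem_append.1 (hSsplit ▸ hs₁S) with h | h
          · exact h
          · have := hS₂gt s₁ h; omega
        have hs₁B : s₁ ∈ B := by
          rcases List.mem_append.1 (hQsplit ▸ hs₁Q) with h | h
          · exact h
          · exact absurd h (hD s₁ hs₁S₁)
        rintro rfl
        simp at hs₁B
      -- conclude with the move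
      obtain ⟨hmove, hperm⟩ := moveR (A := P) (B := B) (D := D) (u := u) hBne hBsmall
      have hlform : l = P ++ u :: (B ++ D) := by rw [hl, hQsplit]
      refine ⟨S₁ ++ u :: S₂, ?_, ?_, Or.inr ⟨P ++ B ++ u :: D, ?_, ?_, ?_⟩⟩
      · exact chain_insert (hSsplit ▸ hc) hS₁lt hS₂gt
      · have := congrArg List.length hSsplit
        simp only [List.length_append, List.length_cons] at *
        omega
      · rw [hlform]; exact hmove
      · rw [hlform]; exact hperm
      · have : (S₁ ++ u :: S₂).Sublist ((P ++ B) ++ u :: D) :=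
          List.Sublist.append hS₁PB (List.Sublist.cons₂ u hS₂D)
        simpa using this
    · -- Branch 3: all missing elements are neither caseB nor caseC
      push_neg at hB hC
      obtain ⟨u, hul, huS⟩ := hmiss
      obtain ⟨P, Q, hl⟩ := List.append_of_mem hul
      obtain ⟨huP, huQ⟩ := nodup_split hn hl
      obtain ⟨S₁, S₂, hSsplit, hS₁lt, hS₂gt⟩ := chain_split S u hc huS
      obtain ⟨A, B, hPsplit, hBbig, hAlast⟩ := suffix_split P u
      have hS₁l : S₁.Sublist l := (hSsplit ▸ List.sublist_append_left S₁ S₂).trans hS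
      have hS₁P : S₁.Sublist P := by
        refine sublist_left_of_notmem_right (hl ▸ hS₁l) ?_
        intro t htS₁ htuQ
        rcases List.mem_cons.1 htuQ with rfl | htQ
        · exact absurd (hS₁lt t htS₁) (lt_irrefl _)
        · refine hC u hul huS ⟨t, hSsplit ▸ List.mem_append_left _ htS₁, hS₁lt t htS₁, ?_⟩
          rw [hl, show P ++ u :: Q = (P ++ [u]) ++ Q by simp]
          exact pair_sublist (by simp) htQ
      have hS₁A : S₁.Sublist A := by
        refine sublist_left_of_notmem_right (hPsplit ▸ hS₁P) ?_
        intro t htS₁ htB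
        have := hBbig t htB
        have := hS₁lt t htS₁
        omega
      have hS₂l : S₂.Sublist l := (hSsplit ▸ List.sublist_append_right S₁ S₂).trans hS
      have hS₂uQ : S₂.Sublist (u :: Q) := by
        refine sublist_right_of_notmem_left (hl ▸ hS₂l) ?_
        intro t htS₂ htP
        refine hB u hul huS ⟨t, hSsplit ▸ List.mem_append_right _ htS₂, hS₂gt t htS₂, ?_⟩
        rw [hl]
        exact pair_sublist htP (by simp)
      have hS₂Q : S₂.Sublist Q := by
        have := sublist_append_of_notmem_mid (X := ([] : List ℕ))
          (by simpa using hS₂uQ)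
          (show u ∉ S₂ from fun h => absurd (hS₂gt u h) (lt_irrefl _))
        simpa using this
      have hchain : List.Chain' (· < ·) (S₁ ++ u :: S₂) :=
        chain_insert (hSsplit ▸ hc) hS₁lt hS₂gt
      have hlen : (S₁ ++ u :: S₂).length = S.length + 1 := by
        have := congrArg List.length hSsplit
        simp only [List.length_append, List.length_cons] at *
        omega
      cases B with
      | nil =>
        refine ⟨S₁ ++ u :: S₂, hchain, hlen, Or.inl ?_⟩
        have hPA : P = A := by simpa using hPsplit
        rw [hl, hPA]
        exact List.Sublist.append hS₁A (List.Sublist.cons₂ u hS₂Q)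
      | cons b B' =>
        obtain ⟨hmove, hperm⟩ := moveL (A := A) (B := b :: B') (D := Q) (u := u)
          (by simp) hBbig
        have hlform : l = A ++ (b :: B') ++ u :: Q := by rw [hl, hPsplit]
        refine ⟨S₁ ++ u :: S₂, hchain, hlen, Or.inr ⟨A ++ u :: ((b :: B') ++ Q), ?_, ?_, ?_⟩⟩
        · rw [hlform]; exact hmove
        · rw [hlform]; exact hperm
        · exact List.Sublist.append hS₁A
            (List.Sublist.cons₂ u (hS₂Q.trans (List.sublist_append_right _ _)))

end Step

section Final
open List

private lemma idL_chain (n : ℕ) : List.Chain' (· < ·) (idL n) := by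
  unfold List.Chain'
  rw [List.isChain_iff_pairwise]
  exact (List.pairwise_lt_range (n := n)).map _ (fun _ _ h => by omega)

private lemma idL_nodup (n : ℕ) : (idL n).Nodup :=
  List.Nodup.map (fun a b h => by omega) (List.nodup_range (n := n))

private lemma eq_idL_of_chain {n : ℕ} {l : List ℕ} (hp : l.Perm (idL n))
    (hc : List.Chain' (· < ·) l) : l = idL n := by
  have : IsAntisymm ℕ (· < ·) := ⟨fun a b h1 h2 => absurd h1 (asymm h2)⟩
  exact List.Perm.eq_of_pairwise (fun a b _ _ h1 h2 => absurd h1 (asymm h2))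
    (List.isChain_iff_pairwise.1 hc) (List.isChain_iff_pairwise.1 (idL_chain n)) hp

private lemma sortsIn_cons {R : List ℕ → List ℕ → Prop} {l l' target : List ℕ} {t : ℕ}
    (h1 : R l l') (h2 : SortsIn R l' target t) : SortsIn R l target (t + 1) := by
  obtain ⟨c, hc0, hct, hstep⟩ := h2
  refine ⟨fun i => match i with | 0 => l | (j+1) => c j, rfl, hct, ?_⟩
  intro i hi
  match i with
  | 0 => simpa [hc0] using h1
  | (j+1) => exact hstep j (by omega)

private lemma sort_aux (n : ℕ) : ∀ m : ℕ, ∀ l S : List ℕ, l.Perm (idL n) →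
    S.Sublist l → List.Chain' (· < ·) S → l.length - S.length ≤ m →
    ∃ t ≤ m, SortsIn IsMonotoneBlockMove l (idL n) t := by
  intro m
  induction m with
  | zero =>
    intro l S hp hsub hc hm
    have hlen : S.length ≤ l.length := hsub.length_le
    have : l = S := (hsub.eq_of_length_le (by omega)).symm
    subst this
    have : l = idL n := eq_idL_of_chain hp hc
    exact ⟨0, le_refl 0, ⟨fun _ => l, rfl, this, fun i hi => absurd hi (by omega)⟩⟩
  | succ m ih =>
    intro l S hp hsub hc hm
    by_cases heq : l.length ≤ S.length
    · have : l = S := (hsub.eq_of_length_le heq).symm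
      subst this
      have : l = idL n := eq_idL_of_chain hp hc
      exact ⟨0, by omega, ⟨fun _ => l, rfl, this, fun i hi => absurd hi (by omega)⟩⟩
    · push_neg at heq
      have hnd : l.Nodup := hp.nodup_iff.2 (idL_nodup n)
      obtain ⟨S', hc', hlen', hor⟩ := exists_step hnd hsub hc heq
      rcases hor with hsub' | ⟨l', hmove, hperm, hsub'⟩
      · obtain ⟨t, ht, hs⟩ := ih l S' hp hsub' hc' (by omega)
        exact ⟨t, by omega, hs⟩
      · obtain ⟨t, ht, hs⟩ := ih l' S' ((hperm.symm).trans hp) hsub' hc'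
          (by have := hperm.length_eq; omega)
        exact ⟨t + 1, by omega, sortsIn_cons hmove hs⟩

/-- Any permutation of `n` elements can be sorted to the identity by at most
`n - lis(π)` monotone block moves. -/
theorem sorting_upper_bound_lis (n : ℕ) (l : List ℕ) (hl : IsPermList n l) :
    ∃ t ≤ n - lis l, SortsIn IsMonotoneBlockMove l (idL n) t := by
  obtain ⟨S, hsub, hc, hlis⟩ := lis_spec l
  have hlen : l.length = n := by
    have := hl.length_eq
    simpa [idL] using this
  exact sort_aux n (n - lis l) l S hl hsub hc (by omega)

end Final
end
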